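/- Let f be a three times continuously differentiable probability density on ℝ with compact support [a,b], positive on (a,b), whose critical points in (a,b) are finitely many and all nondegenerate, with local minima m_1 < ⋯ < m_{r−1} in (a,b), and let P be the probability measure with density f. Let K ⊂ (a,b) be a compact set containing all critical points of f in its interior, and let (g_n) be twice continuously differentiable functions with g_n' → f' and g_n'' → f'' uniformly, so that for all n beyond some n_0 the function g_n has exactly r − 1 local minima m̂_{n,1} < ⋯ < m̂_{n,r−1} in K. Let 𝒞̂_n be the modal clustering induced by g_n and 𝒞_0 the modal clustering induced by f. Then d_H(𝒞̂_n, 𝒞_0) → 0 as n → ∞. -/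

import Mathlib

open MeasureTheory Filter Set
open scoped ENNReal Topology

/-- The modal (interval) clustering of `ℝ` determined by cut points `m 0 < ⋯ < m (r-2)`:
cluster `i` is the open interval `(m (i-1), m i)`, with `m (-1) = -∞` and `m (r-1) = +∞`. -/
def intervalClusters (r : ℕ) (m : Fin (r - 1) → ℝ) (i : Fin r) : Set ℝ :=
  {x : ℝ | (∀ j : Fin (r - 1), (j : ℕ) < (i : ℕ) → m j < x) ∧
           (∀ j : Fin (r - 1), (i : ℕ) ≤ (j : ℕ) → x < m j)}

/-- The Hausdorff distance between two clusterings: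
`d_H(𝒞,𝒟) = max{ maxᵢ minⱼ P(Cᵢ △ Dⱼ), maxⱼ minᵢ P(Cᵢ △ Dⱼ) }`. -/
noncomputable def clusterDistH {X : Type*} [MeasurableSpace X] {r s : ℕ}
    (P : Measure X) (C : Fin r → Set X) (D : Fin s → Set X) : ℝ≥0∞ :=
  max (⨆ i, ⨅ j, P (symmDiff (C i) (D j))) (⨆ j, ⨅ i, P (symmDiff (C i) (D j)))

/-- A strictly monotone self-map of `Fin k` is the identity. -/
lemma fin_strictMono_id {k : ℕ} {σ : Fin k → Fin k} (h : StrictMono σ) : ∀ j, σ j = j := by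
  have hbij : Function.Bijective σ := Finite.injective_iff_bijective.1 h.injective
  obtain ⟨τ, hτ₁, hτ₂⟩ := Function.bijective_iff_has_inverse.1 hbij
  have hτ : StrictMono τ := fun x y hxy => h.lt_iff_lt.1 (by rw [hτ₂ x, hτ₂ y]; exact hxy)
  intro j
  haveI : WellFoundedLT (Fin k) := inferInstance
  have h1 : j ≤ σ j := h.le_apply
  have h2 : σ j ≤ τ (σ j) := hτ.le_apply
  rw [hτ₁ j] at h2
  exact le_antisymm h2 h1

/-- If all cut points moved by less than `δ`, the symmetric difference of corresponding
interval clusters is contained in the union of `δ`-neighbourhoods of the cut points. -/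
lemma symmDiff_clusters_subset {r : ℕ} (mh mm : Fin (r - 1) → ℝ) {δ : ℝ}
    (h : ∀ j, |mh j - mm j| < δ) (i : Fin r) :
    symmDiff (intervalClusters r mh i) (intervalClusters r mm i) ⊆
      ⋃ j, Icc (mm j - δ) (mm j + δ) := by
  intro x hx
  by_contra hxU
  simp only [mem_iUnion, mem_Icc, not_exists, not_and, not_le] at hxU
  have key : ∀ j : Fin (r - 1), (mm j < x ↔ mh j < x) ∧ (x < mm j ↔ x < mh j) := by
    intro j
    have habs := abs_sub_lt_iff.1 (h j)
    rcases le_or_gt (mm j - δ) x with hle | hlt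
    · have hgt : mm j + δ < x := hxU j hle
      exact ⟨⟨fun _ => by linarith [habs.1, habs.2], fun _ => by linarith [habs.1, habs.2]⟩,
        ⟨fun hh => by linarith [habs.1, habs.2], fun hh => by linarith [habs.1, habs.2]⟩⟩
    · exact ⟨⟨fun hh => by linarith [habs.1, habs.2], fun hh => by linarith [habs.1, habs.2]⟩,
        ⟨fun _ => by linarith [habs.1, habs.2], fun _ => by linarith [habs.1, habs.2]⟩⟩
  have hmem : x ∈ intervalClusters r mh i ↔ x ∈ intervalClusters r mm i := by
    simp only [intervalClusters, mem_setOf_eq]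
    constructor
    · rintro ⟨h1, h2⟩
      exact ⟨fun j hj => (key j).1.2 (h1 j hj), fun j hj => (key j).2.2 (h2 j hj)⟩
    · rintro ⟨h1, h2⟩
      exact ⟨fun j hj => (key j).1.1 (h1 j hj), fun j hj => (key j).2.1 (h2 j hj)⟩
  rcases Set.mem_symmDiff.1 hx with ⟨h1, h2⟩ | ⟨h1, h2⟩
  · exact h2 (hmem.1 h1)
  · exact h2 (hmem.2 h1)

/-- At a nondegenerate local minimum the second derivative is positive. -/
lemma isLocalMin_deriv2_pos {f : ℝ → ℝ} (hc : Continuous f) (hc' : Continuous (deriv f))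
    (hc'' : Continuous (deriv (deriv f))) {x : ℝ} (hmin : IsLocalMin f x)
    (hne : deriv (deriv f) x ≠ 0) : 0 < deriv (deriv f) x := by
  rcases hne.lt_or_gt with hlt | hpos
  · exfalso
    have h0 : deriv f x = 0 := hmin.deriv_eq_zero
    have hev : ∀ᶠ y in 𝓝 x, deriv (deriv f) y < 0 :=
      Filter.Tendsto.eventually_lt_const hlt hc''.continuousAt
    obtain ⟨s, hs0, hs⟩ := Metric.eventually_nhds_iff.1 hev
    set t := s / 2 with ht
    have ht0 : 0 < t := by positivity
    have hsub : ∀ y ∈ Icc (x - t) (x + t), deriv (deriv f) y < 0 := by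
      intro y hy
      rw [mem_Icc] at hy
      refine hs ?_
      rw [Real.dist_eq]
      have : |y - x| ≤ t := abs_le.2 ⟨by linarith [hy.1], by linarith [hy.2]⟩
      linarith
    have hanti' : StrictAntiOn (deriv f) (Icc x (x + t)) := by
      refine strictAntiOn_of_deriv_neg (convex_Icc _ _) hc'.continuousOn ?_
      intro y hy
      rw [interior_Icc] at hy
      exact hsub y ⟨by linarith [hy.1], hy.2.le⟩
    have hfneg : ∀ y ∈ Ioc x (x + t), deriv f y < 0 := by
      intro y hy
      have := hanti' (left_mem_Icc.2 (by linarith)) ⟨hy.1.le, hy.2⟩ hy.1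
      rwa [h0] at this
    have hanti : StrictAntiOn f (Icc x (x + t)) := by
      refine strictAntiOn_of_deriv_neg (convex_Icc _ _) hc.continuousOn ?_
      intro y hy
      rw [interior_Icc] at hy
      exact hfneg y ⟨hy.1, hy.2.le⟩
    obtain ⟨s', hs'0, hs'⟩ := Metric.eventually_nhds_iff.1 hmin
    set y := x + min t s' / 2 with hy
    have hmin' : 0 < min t s' := lt_min ht0 hs'0
    have hy1 : x < y := by rw [hy]; linarith
    have hy2 : y ≤ x + t := by rw [hy]; have := min_le_left t s'; linarith
    have h1 : f y < f x := hanti (left_mem_Icc.2 (by linarith)) ⟨hy1.le, hy2⟩ hy1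
    have h2 : f x ≤ f y := by
      refine hs' ?_
      rw [Real.dist_eq, hy]
      have := min_le_right t s'
      rw [show x + min t s' / 2 - x = min t s' / 2 by ring, abs_of_pos (by linarith)]
      linarith
    linarith
  · exact hpos

/-- Consistency of plug-in modal clustering in the Hausdorff distance between clusterings:
if `f` is a `C³` probability density with compact support `[a,b]`, positive on `(a,b)`, with
finitely many nondegenerate critical points and local minima `m₁ < ⋯ < m_{r-1}`, and `gₙ` are
`C²` functions with `gₙ' → f'`, `gₙ'' → f''` uniformly whose local minima in `K` are
eventually `m̂_{n,1} < ⋯ < m̂_{n,r-1}`, then `d_H(𝒞̂ₙ, 𝒞₀) → 0`. -/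
theorem modal_clustering_consistent_distH
    (f : ℝ → ℝ) (hf : ContDiff ℝ 3 f)
    (a b : ℝ) (hab : a < b)
    (hf_nonneg : ∀ x, 0 ≤ f x)
    (hf_int : ∫ x, f x = 1)
    (hf_supp : tsupport f = Set.Icc a b)
    (hf_pos : ∀ x ∈ Set.Ioo a b, 0 < f x)
    (hcrit_fin : {x | x ∈ Set.Ioo a b ∧ deriv f x = 0}.Finite)
    (hnondeg : ∀ x ∈ Set.Ioo a b, deriv f x = 0 → deriv (deriv f) x ≠ 0)
    (P : Measure ℝ) (hP : P = volume.withDensity (fun x => ENNReal.ofReal (f x)))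
    (r : ℕ) (hr : 1 ≤ r)
    (m : Fin (r - 1) → ℝ) (hm_mono : StrictMono m)
    (hm_mem : ∀ j, m j ∈ Set.Ioo a b)
    (hm_min : {x | x ∈ Set.Ioo a b ∧ IsLocalMin f x} = Set.range m)
    (K : Set ℝ) (hK : IsCompact K) (hK_sub : K ⊆ Set.Ioo a b)
    (hK_crit : {x | x ∈ Set.Ioo a b ∧ deriv f x = 0} ⊆ interior K)
    (g : ℕ → ℝ → ℝ) (hg : ∀ n, ContDiff ℝ 2 (g n))
    (hg1 : TendstoUniformly (fun n => deriv (g n)) (deriv f) atTop)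
    (hg2 : TendstoUniformly (fun n => deriv (deriv (g n))) (deriv (deriv f)) atTop)
    (mhat : ℕ → Fin (r - 1) → ℝ) (n₀ : ℕ)
    (hmhat_mono : ∀ n ≥ n₀, StrictMono (mhat n))
    (hmhat_min : ∀ n ≥ n₀, {x | x ∈ K ∧ IsLocalMin (g n) x} = Set.range (mhat n)) :
    Tendsto (fun n => clusterDistH P (intervalClusters r (mhat n)) (intervalClusters r m))
      atTop (nhds 0) := by
  -- smoothness facts
  have hfc : Continuous f := hf.continuous
  have hf2 : ContDiff ℝ 2 (deriv f) := by
    have h := contDiff_succ_iff_deriv (n := 2) (f := f) (𝕜 := ℝ)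
    rw [(by norm_num : (2 : WithTop ℕ∞) + 1 = 3)] at h
    exact (h.1 hf).2.2
  have hf'c : Continuous (deriv f) := hf2.continuous
  have hf''c : Continuous (deriv (deriv f)) := hf2.continuous_deriv (by norm_num)
  have hgd1 : ∀ n, ContDiff ℝ 1 (deriv (g n)) := by
    intro n
    have h := contDiff_succ_iff_deriv (n := 1) (f := g n) (𝕜 := ℝ)
    rw [(by norm_num : (1 : WithTop ℕ∞) + 1 = 2)] at h
    exact (h.1 (hg n)).2.2
  have hgc : ∀ n, Continuous (g n) := fun n => (hg n).continuous
  have hgdiff : ∀ n, Differentiable ℝ (g n) := fun n => (hg n).differentiable (by norm_num)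
  have hgdc : ∀ n, Continuous (deriv (g n)) := fun n => (hgd1 n).continuous
  -- finiteness of P
  have hsupp : HasCompactSupport f := by rw [HasCompactSupport, hf_supp]; exact isCompact_Icc
  have hPuniv : P univ = 1 := by
    rw [hP, withDensity_apply _ MeasurableSet.univ, Measure.restrict_univ,
      ← ofReal_integral_eq_lintegral_ofReal (hfc.integrable_of_hasCompactSupport hsupp)
        (Filter.Eventually.of_forall hf_nonneg), hf_int, ENNReal.ofReal_one]
  have hPfin : ∀ s : Set ℝ, P s ≠ ∞ := by
    intro s
    refine ((measure_mono (subset_univ s)).trans_lt ?_).ne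
    rw [hPuniv]; exact ENNReal.one_lt_top
  -- small intervals have small measure
  have hsmall : ∀ (x : ℝ) (ε : ℝ≥0∞), 0 < ε → ∃ v > (0 : ℝ), P (Icc (x - v) (x + v)) < ε := by
    intro x ε hε
    set s : ℕ → Set ℝ := fun k => Icc (x - 1 / ((k : ℝ) + 1)) (x + 1 / ((k : ℝ) + 1)) with hsdef
    have hanti : Antitone s := by
      intro k l hkl
      have h1 : 1 / ((l : ℝ) + 1) ≤ 1 / ((k : ℝ) + 1) := by
        apply one_div_le_one_div_of_le
        · positivity
        · exact_mod_cast by omega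
      exact Icc_subset_Icc (by linarith) (by linarith)
    have hseq := tendsto_measure_iInter_atTop (μ := P)
      (fun k => measurableSet_Icc.nullMeasurableSet) hanti ⟨0, hPfin _⟩
    have hinter : (⋂ k, s k) = {x} := by
      ext y
      simp only [hsdef, mem_iInter, mem_Icc, mem_singleton_iff]
      constructor
      · intro hy
        by_contra hne
        have hpos : 0 < |y - x| := abs_pos.2 (sub_ne_zero.2 hne)
        obtain ⟨k, hk⟩ := exists_nat_one_div_lt hpos
        have h1 := (hy k).1
        have h2 := (hy k).2
        have : |y - x| ≤ 1 / ((k : ℝ) + 1) := abs_le.2 ⟨by linarith, by linarith⟩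
        linarith
      · intro h
        subst h
        intro k
        have : (0 : ℝ) < 1 / ((k : ℝ) + 1) := by positivity
        constructor <;> linarith
    have hx0 : P {x} = 0 := by
      rw [hP, withDensity_apply _ (measurableSet_singleton x)]
      exact setLIntegral_measure_zero _ _ Real.volume_singleton
    rw [hinter, hx0] at hseq
    obtain ⟨k, hk⟩ := (Filter.Tendsto.eventually_lt_const hε hseq).exists
    exact ⟨1 / ((k : ℝ) + 1), by positivity, hk⟩
  rw [ENNReal.tendsto_nhds_zero]
  intro ε hε
  rcases Nat.eq_zero_or_pos (r - 1) with hk0 | hkpos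
  · -- no cut points: clusters coincide
    haveI : IsEmpty (Fin (r - 1)) := by rw [hk0]; infer_instance
    refine Filter.Eventually.of_forall fun n => ?_
    have hb : ∀ i : Fin r,
        P (symmDiff (intervalClusters r (mhat n) i) (intervalClusters r m i)) ≤ ε := by
      intro i
      have hsub := symmDiff_clusters_subset (mhat n) m (δ := 1) (fun j => isEmptyElim j) i
      rw [Set.iUnion_of_empty] at hsub
      calc P _ ≤ P ∅ := measure_mono hsub
        _ = 0 := measure_empty
        _ ≤ ε := zero_le
    exact max_le (iSup_le fun i => (iInf_le _ i).trans (hb i))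
      (iSup_le fun j => (iInf_le _ j).trans (hb j))
  -- main case
  haveI hne : Nonempty (Fin (r - 1)) := Fin.pos_iff_nonempty.1 hkpos
  have hmj : ∀ j, IsLocalMin f (m j) ∧ m j ∈ Ioo a b := by
    intro j
    have : m j ∈ {x | x ∈ Ioo a b ∧ IsLocalMin f x} := by rw [hm_min]; exact mem_range_self j
    exact ⟨this.2, this.1⟩
  have hderiv0 : ∀ j, deriv f (m j) = 0 := fun j => (hmj j).1.deriv_eq_zero
  have hintK : ∀ j, m j ∈ interior K := fun j => hK_crit ⟨(hmj j).2, hderiv0 j⟩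
  have hf''pos : ∀ j, 0 < deriv (deriv f) (m j) := fun j =>
    isLocalMin_deriv2_pos hfc hf'c hf''c (hmj j).1 (hnondeg _ (hmj j).2 (hderiv0 j))
  -- choose a good radius u j around each m j
  have hu : ∀ j, ∃ u > (0 : ℝ), Icc (m j - u) (m j + u) ⊆ interior K ∧
      ∀ x ∈ Icc (m j - u) (m j + u), 0 < deriv (deriv f) x := by
    intro j
    have h1 : ∀ᶠ y in 𝓝 (m j), 0 < deriv (deriv f) y :=
      Filter.Tendsto.eventually_const_lt (hf''pos j) hf''c.continuousAt
    have h2 : ∀ᶠ y in 𝓝 (m j), y ∈ interior K := isOpen_interior.eventually_mem (hintK j)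
    obtain ⟨s, hs0, hs⟩ := Metric.eventually_nhds_iff.1 (h2.and h1)
    have hball : ∀ y ∈ Icc (m j - s / 2) (m j + s / 2), dist y (m j) < s := by
      intro y hy
      rw [mem_Icc] at hy
      rw [Real.dist_eq]
      have : |y - m j| ≤ s / 2 := abs_le.2 ⟨by linarith [hy.1], by linarith [hy.2]⟩
      linarith
    exact ⟨s / 2, by positivity, fun y hy => (hs (hball y hy)).1,
      fun y hy => (hs (hball y hy)).2⟩
  choose u hu0 huK huf using hu
  -- gap between consecutive minima
  obtain ⟨γ, hγ0, hγ⟩ : ∃ γ > (0 : ℝ), ∀ j j' : Fin (r - 1), j < j' → m j + γ < m j' - γ := by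
    set S : Finset (Fin (r - 1) × Fin (r - 1)) :=
      Finset.univ.filter (fun p => p.1 < p.2) with hS
    rcases S.eq_empty_or_nonempty with hSe | hSne
    · refine ⟨1, one_pos, fun j j' hjj => ?_⟩
      exfalso
      have hmem : (j, j') ∈ S := by simp [hS, hjj]
      rw [hSe] at hmem
      simp at hmem
    · refine ⟨S.inf' hSne (fun p => (m p.2 - m p.1) / 3), ?_, ?_⟩
      · rw [gt_iff_lt, Finset.lt_inf'_iff]
        intro p hp
        have hplt : p.1 < p.2 := by simpa [hS] using hp
        have := hm_mono hplt
        linarith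
      · intro j j' hjj
        have hmem : (j, j') ∈ S := by simp [hS, hjj]
        have h1 : S.inf' hSne (fun p => (m p.2 - m p.1) / 3) ≤ (m j' - m j) / 3 :=
          Finset.inf'_le _ hmem
        have h2 : m j < m j' := hm_mono hjj
        have h3 : 0 < S.inf' hSne (fun p => (m p.2 - m p.1) / 3) := by
          rw [Finset.lt_inf'_iff]
          intro p hp
          have hplt : p.1 < p.2 := by simpa [hS] using hp
          have := hm_mono hplt
          linarith
        linarith
  -- measure radii
  have hεr : (0 : ℝ≥0∞) < ε / r :=
    ENNReal.div_pos hε.ne' (ENNReal.natCast_ne_top r)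
  have hv : ∀ j, ∃ v > (0 : ℝ), P (Icc (m j - v) (m j + v)) < ε / r := fun j =>
    hsmall (m j) _ hεr
  choose v hv0 hvP using hv
  -- the common radius δ
  set δ : ℝ := min (min γ (Finset.univ.inf' Finset.univ_nonempty u))
    (Finset.univ.inf' Finset.univ_nonempty v) with hδdef
  have hδ0 : 0 < δ := by
    refine lt_min (lt_min hγ0 ?_) ?_ <;> rw [Finset.lt_inf'_iff] <;>
      intro j _ <;> [exact hu0 j; exact hv0 j]
  have hδγ : δ ≤ γ := le_trans (min_le_left _ _) (min_le_left _ _)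
  have hδu : ∀ j, δ ≤ u j := fun j =>
    le_trans (min_le_left _ _) (le_trans (min_le_right _ _)
      (Finset.inf'_le _ (Finset.mem_univ j)))
  have hδv : ∀ j, δ ≤ v j := fun j =>
    le_trans (min_le_right _ _) (Finset.inf'_le _ (Finset.mem_univ j))
  have hIccsub : ∀ j, Icc (m j - δ) (m j + δ) ⊆ Icc (m j - u j) (m j + u j) := fun j =>
    Icc_subset_Icc (by linarith [hδu j]) (by linarith [hδu j])
  -- signs of f' at the endpoints
  have hf'sign : ∀ j, deriv f (m j - δ) < 0 ∧ 0 < deriv f (m j + δ) := by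
    intro j
    have hsm : StrictMonoOn (deriv f) (Icc (m j - δ) (m j + δ)) := by
      refine strictMonoOn_of_deriv_pos (convex_Icc _ _) hf'c.continuousOn ?_
      intro y hy
      rw [interior_Icc] at hy
      exact huf j y (hIccsub j ⟨hy.1.le, hy.2.le⟩)
    have hmem1 : m j - δ ∈ Icc (m j - δ) (m j + δ) := left_mem_Icc.2 (by linarith)
    have hmem2 : m j + δ ∈ Icc (m j - δ) (m j + δ) := right_mem_Icc.2 (by linarith)
    have hmemm : m j ∈ Icc (m j - δ) (m j + δ) := ⟨by linarith, by linarith⟩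
    constructor
    · have := hsm hmem1 hmemm (by linarith)
      rwa [hderiv0 j] at this
    · have := hsm hmemm hmem2 (by linarith)
      rwa [hderiv0 j] at this
  -- positive lower bound for f'' near each m j
  have hη : ∀ j, ∃ η > (0 : ℝ), ∀ x ∈ Icc (m j - δ) (m j + δ), η ≤ deriv (deriv f) x := by
    intro j
    obtain ⟨y, hy, hymin⟩ := (isCompact_Icc (a := m j - δ) (b := m j + δ)).exists_isMinOn
      ⟨m j, ⟨by linarith, by linarith⟩⟩ hf''c.continuousOn
    exact ⟨deriv (deriv f) y, huf j y (hIccsub j hy), fun x hx => hymin hx⟩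
  choose η hη0 hηle using hη
  -- eventually each interval around m j contains a local min of g n, hence some mhat
  have hev : ∀ᶠ n in atTop, ∀ j : Fin (r - 1), ∃ i, mhat n i ∈ Ioo (m j - δ) (m j + δ) := by
    have hevj : ∀ j : Fin (r - 1), ∀ᶠ n in atTop,
        (∀ x ∈ Icc (m j - δ) (m j + δ), 0 < deriv (deriv (g n)) x) ∧
        deriv (g n) (m j - δ) < 0 ∧ 0 < deriv (g n) (m j + δ) := by
      intro j
      have e1 := (Metric.tendstoUniformly_iff.1 hg2) (η j) (hη0 j)
      have e2 : ∀ᶠ n in atTop, deriv (g n) (m j - δ) < 0 :=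
        Filter.Tendsto.eventually_lt_const (hf'sign j).1 (hg1.tendsto_at (m j - δ))
      have e3 : ∀ᶠ n in atTop, 0 < deriv (g n) (m j + δ) :=
        Filter.Tendsto.eventually_const_lt (hf'sign j).2 (hg1.tendsto_at (m j + δ))
      filter_upwards [e1, e2, e3] with n h1 h2 h3
      refine ⟨fun x hx => ?_, h2, h3⟩
      have hd := h1 x
      rw [Real.dist_eq] at hd
      have hd' := abs_sub_lt_iff.1 hd
      have := hηle j x hx
      linarith [hd'.1, hd'.2]
    filter_upwards [eventually_all.2 hevj, eventually_ge_atTop n₀] with n hn hn₀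
    intro j
    obtain ⟨hgpp, hg1n, hg2n⟩ := hn j
    have hab' : m j - δ ≤ m j + δ := by linarith
    obtain ⟨c, hc, hc0⟩ := intermediate_value_Ioo hab' (hgdc n).continuousOn
      (⟨hg1n, hg2n⟩ : (0 : ℝ) ∈ Ioo (deriv (g n) (m j - δ)) (deriv (g n) (m j + δ)))
    have hgsm : StrictMonoOn (deriv (g n)) (Icc (m j - δ) (m j + δ)) := by
      refine strictMonoOn_of_deriv_pos (convex_Icc _ _) (hgdc n).continuousOn ?_
      intro y hy
      rw [interior_Icc] at hy
      exact hgpp y ⟨hy.1.le, hy.2.le⟩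
    have hcI : c ∈ Icc (m j - δ) (m j + δ) := ⟨hc.1.le, hc.2.le⟩
    have hA : AntitoneOn (g n) (Icc (m j - δ) c) := by
      refine antitoneOn_of_deriv_nonpos (convex_Icc _ _) (hgc n).continuousOn
        (hgdiff n).differentiableOn ?_
      intro y hy
      rw [interior_Icc] at hy
      have : deriv (g n) y < deriv (g n) c :=
        hgsm ⟨hy.1.le, by linarith [hy.2, hc.2]⟩ hcI hy.2
      rw [hc0] at this
      exact this.le
    have hB : MonotoneOn (g n) (Icc c (m j + δ)) := by
      refine monotoneOn_of_deriv_nonneg (convex_Icc _ _) (hgc n).continuousOn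
        (hgdiff n).differentiableOn ?_
      intro y hy
      rw [interior_Icc] at hy
      have : deriv (g n) c < deriv (g n) y :=
        hgsm hcI ⟨by linarith [hy.1, hc.1], hy.2.le⟩ hy.1
      rw [hc0] at this
      exact this.le
    have hmin : IsLocalMin (g n) c := by
      have hmem : Ioo (m j - δ) (m j + δ) ∈ 𝓝 c := Ioo_mem_nhds hc.1 hc.2
      refine Filter.eventually_of_mem hmem fun x hx => ?_
      rcases le_total x c with hxc | hxc
      · exact hA ⟨hx.1.le, hxc⟩ ⟨hc.1.le, le_refl c⟩ hxc
      · exact hB ⟨le_refl c, hc.2.le⟩ ⟨hxc, hx.2.le⟩ hxc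
    have hcK : c ∈ K := interior_subset (huK j (hIccsub j hcI))
    have : c ∈ Set.range (mhat n) := by
      rw [← hmhat_min n hn₀]
      exact ⟨hcK, hmin⟩
    obtain ⟨i, hi⟩ := this
    exact ⟨i, by rw [hi]; exact hc⟩
  -- conclusion
  filter_upwards [hev, eventually_ge_atTop n₀] with n hn hn₀
  choose σ hσ using hn
  have horder : StrictMono σ := by
    intro j j' hlt
    have h1 := hσ j
    have h2 := hσ j'
    have hsep := hγ j j' hlt
    have hm' : mhat n (σ j) < mhat n (σ j') := by
      have := h1.2
      have := h2.1
      linarith [hδγ]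
    exact (hmhat_mono n hn₀).lt_iff_lt.1 hm'
  have hσid := fin_strictMono_id horder
  have hmm : ∀ j, |mhat n j - m j| < δ := by
    intro j
    have := hσ j
    rw [hσid j] at this
    exact abs_sub_lt_iff.2 ⟨by linarith [this.2], by linarith [this.1]⟩
  have hsub : ∀ i : Fin r,
      P (symmDiff (intervalClusters r (mhat n) i) (intervalClusters r m i)) ≤ ε := by
    intro i
    calc P (symmDiff (intervalClusters r (mhat n) i) (intervalClusters r m i))
        ≤ P (⋃ j, Icc (m j - δ) (m j + δ)) :=
          measure_mono (symmDiff_clusters_subset (mhat n) m hmm i)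
      _ ≤ ∑ j : Fin (r - 1), P (Icc (m j - δ) (m j + δ)) := measure_iUnion_fintype_le _ _
      _ ≤ ∑ _j : Fin (r - 1), ε / r := by
          refine Finset.sum_le_sum fun j _ => ?_
          refine le_of_lt (lt_of_le_of_lt (measure_mono
            (Icc_subset_Icc (by linarith [hδv j]) (by linarith [hδv j]))) (hvP j))
      _ = ((r - 1 : ℕ) : ℝ≥0∞) * (ε / r) := by
          rw [Finset.sum_const, Finset.card_univ, Fintype.card_fin, nsmul_eq_mul]
      _ ≤ ((r : ℕ) : ℝ≥0∞) * (ε / r) := by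
          gcongr
          exact_mod_cast Nat.sub_le r 1
      _ = ε := ENNReal.mul_div_cancel (by exact_mod_cast (by omega : r ≠ 0))
          (ENNReal.natCast_ne_top r)
  exact max_le (iSup_le fun i => (iInf_le _ i).trans (hsub i))
    (iSup_le fun j => (iInf_le _ j).trans (hsub j))
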